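/- Let D = {d, d*} ∪ X be a set of 2λ positive integers with d < d*, such that X (of size 2λ−2) can be partitioned into pairs of consecutive integers. Then there exists a path P = 0, p₁, p₂, …, p_{2λ} of length 2λ with integer vertices such that: (i) (p₁, p₂) = (−d, d*−d) and pᵢ ∈ [d*−d+1, d*−d+max X] for all i > 2; (ii) p_{2λ} = d*−d+λ−1; (iii) the multiset of differences of P equals ±D. -/

import Mathlib

/-- A finite set of integers can be partitioned into pairs of consecutive integers. -/
def PairsOfConsecutive (X : Finset ℤ) : Prop :=
  ∃ S : Finset ℤ, Disjoint S (S.image (· + 1)) ∧ S ∪ S.image (· + 1) = X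

private lemma stmt4_four (a b : ℤ) :
    ({a, -a} : Multiset ℤ) + {-b, b}
      = ((({a} : Multiset ℤ) + {b}) + ((({a} : Multiset ℤ) + {b}).map (fun x => -x))) := by
  simp only [Multiset.map_add, Multiset.map_singleton, Multiset.insert_eq_cons,
    ← Multiset.singleton_add]
  abel

private lemma stmt4_four' (a b : ℤ) :
    ({-a, a} : Multiset ℤ) + {b, -b}
      = ((({a} : Multiset ℤ) + {b}) + ((({a} : Multiset ℤ) + {b}).map (fun x => -x))) := by
  simp only [Multiset.map_add, Multiset.map_singleton, Multiset.insert_eq_cons,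
    ← Multiset.singleton_add]
  abel

private lemma stmt4_pairs (m : ℕ) (h : ℕ → Multiset ℤ) :
    ∑ n ∈ Finset.range (2*m), h n = ∑ k ∈ Finset.range m, (h (2*k) + h (2*k+1)) := by
  induction m with
  | zero => simp
  | succ m ih =>
      rw [Finset.sum_range_succ, ← ih, show 2*(m+1) = (2*m+1)+1 by ring,
        Finset.sum_range_succ, Finset.sum_range_succ]
      ring_nf
      rw [add_assoc]

private lemma stmt4_sum_singleton (m : ℕ) (g : ℕ → ℤ) :
    ∑ j ∈ Finset.range m, ({g j} : Multiset ℤ) = (Multiset.range m).map g := by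
  rw [← Multiset.bind_singleton]; rfl

theorem stmt4 (lam : ℕ) (hlam : 0 < lam) (d dstar : ℤ) (X D : Finset ℤ)
    (hdlt : d < dstar) (hdX : d ∉ X) (hdsX : dstar ∉ X)
    (hD : D = insert d (insert dstar X))
    (hcard : D.card = 2 * lam) (hpos : ∀ x ∈ D, 0 < x)
    (hX : PairsOfConsecutive X) :
    ∃ p : Fin (2 * lam + 1) → ℤ,
      Function.Injective p ∧
      p 0 = 0 ∧
      p 1 = -d ∧ p 2 = dstar - d ∧
      (∀ i : Fin (2 * lam + 1), 2 < (i : ℕ) →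
        p i ∈ Set.Icc (dstar - d + 1) (dstar - d + X.max.unbotD 0)) ∧
      p (Fin.last (2 * lam)) = dstar - d + lam - 1 ∧
      ((Finset.univ.val : Multiset (Fin (2 * lam))).bind fun i =>
          {p i.succ - p i.castSucc, -(p i.succ - p i.castSucc)})
        = D.val + D.val.map (fun x => -x) := by
  obtain ⟨m, rfl⟩ : ∃ m, lam = m + 1 := ⟨lam - 1, by omega⟩
  obtain ⟨S, hdisj, hunion⟩ := hX
  have hinj1 : Function.Injective (fun x : ℤ => x + 1) := fun a b h => by
    simpa using h
  have hdds : d ≠ dstar := ne_of_lt hdlt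
  have hd0 : 0 < d := hpos d (by rw [hD]; simp)
  have hds0 : 0 < dstar := hpos dstar (by rw [hD]; simp)
  have hXcard : X.card = 2 * m := by
    have h1 : D.card = X.card + 2 := by
      rw [hD, Finset.card_insert_of_notMem (by simp [hdX, hdds]),
        Finset.card_insert_of_notMem hdsX]
    omega
  have hScard : S.card = m := by
    have h2 := Finset.card_union_of_disjoint hdisj
    rw [hunion, Finset.card_image_of_injective _ hinj1] at h2
    omega
  -- enumeration of S in increasing order
  obtain ⟨xs, hmem, hsurj, hmono⟩ : ∃ xs : ℕ → ℤ, (∀ j, j < m → xs j ∈ S) ∧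
      (∀ a ∈ S, ∃ j, j < m ∧ xs j = a) ∧
      (∀ j j', j < j' → j' < m → xs j < xs j') := by
    refine ⟨fun j => if hj : j < m then (S.orderIsoOfFin hScard ⟨j, hj⟩ : ℤ) else 0, ?_, ?_, ?_⟩
    · intro j hj
      simp only [dif_pos hj]
      exact (S.orderIsoOfFin hScard ⟨j, hj⟩).2
    · intro a ha
      refine ⟨((S.orderIsoOfFin hScard).symm ⟨a, ha⟩ : Fin m), Fin.is_lt _, ?_⟩
      simp only [dif_pos (Fin.is_lt _)]
      simp
    · intro j j' h hm'
      simp only [dif_pos (h.trans hm'), dif_pos hm']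
      exact_mod_cast (S.orderIsoOfFin hScard).lt_iff_lt.mpr (Fin.mk_lt_mk.mpr h)
  have hSX : ∀ a ∈ S, a ∈ X := fun a ha => hunion ▸ Finset.mem_union_left _ ha
  have hx1X : ∀ a ∈ S, a + 1 ∈ X := fun a ha =>
    hunion ▸ Finset.mem_union_right _ (Finset.mem_image.mpr ⟨a, ha, rfl⟩)
  have hposX : ∀ x ∈ X, 0 < x := fun x hx => hpos x (by rw [hD]; simp [hx])
  have hxs_pos : ∀ j, j < m → 1 ≤ xs j := fun j hj => by
    have := hposX _ (hSX _ (hmem j hj)); omega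
  have hnocons : ∀ a ∈ S, a + 1 ∉ S := by
    intro a ha h
    exact Finset.disjoint_left.mp hdisj h (Finset.mem_image.mpr ⟨a, ha, rfl⟩)
  have hgap : ∀ j, j + 1 < m → xs j + 2 ≤ xs (j+1) := by
    intro j hj
    have h1 := hmono j (j+1) (by omega) hj
    by_contra h
    push_neg at h
    have h2 : xs (j+1) = xs j + 1 := by omega
    exact hnocons _ (hmem j (by omega)) (h2 ▸ hmem (j+1) hj)
  have hgap' : ∀ j c, j + c < m → xs j + 2*(c:ℤ) ≤ xs (j + c) := by
    intro j c
    induction c with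
    | zero => intro _; simp
    | succ c ih =>
        intro h
        have h1 := hgap (j+c) (by omega)
        have h2 := ih (by omega)
        have h3 : j + (c+1) = (j + c) + 1 := by omega
        rw [h3]
        push_cast
        omega
  set b : ℤ := dstar - d with hbdef
  have hb : 1 ≤ b := by omega
  obtain ⟨f, heval0, heval1, hevenval, hoddval⟩ : ∃ f : ℕ → ℤ, f 0 = 0 ∧ f 1 = -d ∧
      (∀ k, f (2*k+2) = b + k) ∧ (∀ k, f (2*k+3) = b + k + (xs (m-1-k) + 1)) := by
    refine ⟨fun n => if n = 0 then 0 else if n = 1 then -d else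
      b + ((n-2)/2 : ℕ) + (if (n-2) % 2 = 1 then xs (m - 1 - (n-2)/2) + 1 else 0),
      by norm_num, by norm_num, ?_, ?_⟩
    · intro k
      have h3 : (2*k+2-2)/2 = k := by omega
      simp only [if_neg (by omega : ¬(2*k+2 = 0)), if_neg (by omega : ¬(2*k+2 = 1)), h3,
        if_neg (by omega : ¬((2*k+2-2) % 2 = 1)), add_zero]
    · intro k
      have h3 : (2*k+3-2)/2 = k := by omega
      simp only [if_neg (by omega : ¬(2*k+3 = 0)), if_neg (by omega : ¬(2*k+3 = 1)), h3,
        if_pos (by omega : (2*k+3-2) % 2 = 1)]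
  -- key bounds
  have hxs_lb : ∀ j, j < m → (1:ℤ) + 2*((j:ℤ)) ≤ xs j := by
    intro j hj
    have h1 := hgap' 0 j (by omega)
    rw [zero_add] at h1
    have h2 := hxs_pos 0 (by omega)
    omega
  have hoddlb : ∀ k, k < m → (m:ℤ) + 1 ≤ (k:ℤ) + (xs (m-1-k) + 1) := by
    intro k hk
    have h1 := hxs_lb (m-1-k) (by omega)
    have h2 : ((m-1-k : ℕ) : ℤ) = (m:ℤ) - 1 - k := by omega
    omega
  have hoddub : ∀ k, k < m → (k:ℤ) + (xs (m-1-k) + 1) ≤ xs (m-1) + 1 := by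
    intro k hk
    have h1 := hgap' (m-1-k) k (by omega)
    rw [show m-1-k+k = m-1 by omega] at h1
    omega
  have hodddec : ∀ k k', k < k' → k' < m →
      (k':ℤ) + (xs (m-1-k') + 1) < (k:ℤ) + (xs (m-1-k) + 1) := by
    intro k k' hkk hk'
    have h1 := hgap' (m-1-k') (k'-k) (by omega)
    rw [show m-1-k'+(k'-k) = m-1-k by omega] at h1
    have h2 : ((k'-k : ℕ) : ℤ) = (k':ℤ) - k := by omega
    omega
  have hm_le : 0 < m → (m:ℤ) ≤ xs (m-1) + 1 := by
    intro hm
    have h1 := hxs_lb (m-1) (by omega)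
    have h2 : ((m-1 : ℕ) : ℤ) = (m:ℤ) - 1 := by omega
    omega
  have hmaxU : 0 < m → xs (m-1) + 1 ≤ X.max.unbotD 0 := by
    intro hm
    have hmem2 : xs (m-1) + 1 ∈ X := hx1X _ (hmem (m-1) (by omega))
    have hne2 : X.Nonempty := ⟨_, hmem2⟩
    rw [← Finset.coe_max' hne2, WithBot.unbotD_coe]
    exact Finset.le_max' _ _ hmem2
  -- decomposition of indices
  have hdecomp : ∀ n, n ≤ 2*m+2 → n = 0 ∨ n = 1 ∨ (∃ k, k ≤ m ∧ n = 2*k+2) ∨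
      (∃ k, k < m ∧ n = 2*k+3) := by
    intro n hn
    rcases Nat.even_or_odd n with ⟨k, hk⟩ | ⟨k, hk⟩
    · by_cases h0 : n = 0
      · exact Or.inl h0
      · exact Or.inr (Or.inr (Or.inl ⟨k-1, by omega, by omega⟩))
    · by_cases h1 : n = 1
      · exact Or.inr (Or.inl h1)
      · exact Or.inr (Or.inr (Or.inr ⟨k-1, by omega, by omega⟩))
  have hne : ∀ n₁ n₂, n₁ < n₂ → n₂ ≤ 2*m+2 → f n₁ ≠ f n₂ := by
    intro n1 n2 hlt hle
    rcases hdecomp n1 (by omega) with rfl | rfl | ⟨k, hk, rfl⟩ | ⟨k, hk, rfl⟩ <;>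
      rcases hdecomp n2 hle with rfl | rfl | ⟨k', hk', rfl⟩ | ⟨k', hk', rfl⟩ <;>
      simp only [heval0, heval1, hevenval, hoddval] <;>
      first
        | omega
        | (have h1 := hoddlb k' hk'; omega)
        | (have h1 := hoddlb k hk; omega)
        | (have h1 := hodddec k k' (by omega) hk'; omega)
  refine ⟨fun i => f i.val, ?_, ?_, ?_, ?_, ?_, ?_, ?_⟩
  · -- injective
    intro i j hij
    rcases lt_trichotomy (i : ℕ) (j : ℕ) with h | h | h
    · exact absurd hij (hne _ _ h (by omega))
    · exact Fin.ext h
    · exact absurd hij.symm (hne _ _ h (by omega))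
  · show f ((0 : Fin (2*(m+1)+1)) : ℕ) = 0
    norm_num [heval0]
  · show f ((1 : Fin (2*(m+1)+1)) : ℕ) = -d
    have h1 : ((1 : Fin (2*(m+1)+1)) : ℕ) = 1 % (2*(m+1)+1) := rfl
    rw [h1, Nat.mod_eq_of_lt (by omega), heval1]
  · show f ((2 : Fin (2*(m+1)+1)) : ℕ) = dstar - d
    have h2 : ((2 : Fin (2*(m+1)+1)) : ℕ) = 2 % (2*(m+1)+1) := rfl
    rw [Nat.mod_eq_of_lt (by omega)] at h2
    rw [h2, show (2:ℕ) = 2*0+2 by norm_num, hevenval]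
    simp [hbdef]
  · -- Icc bounds
    intro i hi
    have hle : (i : ℕ) ≤ 2*m+2 := by omega
    rcases hdecomp i hle with h0 | h1 | ⟨k, hk, hik⟩ | ⟨k, hk, hik⟩
    · omega
    · omega
    · have hk1 : 1 ≤ k := by omega
      show f i.val ∈ _
      rw [hik, hevenval]
      constructor
      · have : (1:ℤ) ≤ k := by exact_mod_cast hk1
        omega
      · have h5 := hm_le (by omega)
        have h6 := hmaxU (by omega)
        have : (k:ℤ) ≤ m := by exact_mod_cast hk
        omega
    · show f i.val ∈ _
      rw [hik, hoddval]
      constructor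
      · have h4 := hxs_pos (m-1-k) (by omega)
        have : (0:ℤ) ≤ k := by positivity
        omega
      · have h5 := hoddub k hk
        have h6 := hmaxU (by omega)
        omega
  · -- last vertex
    show f ((Fin.last (2*(m+1))) : ℕ) = dstar - d + ((m:ℤ)+1) - 1
    rw [Fin.val_last, show 2*(m+1) = 2*m+2 by ring, hevenval]
    ring
  · -- the multiset of differences
    have hXval : X.val = S.val + S.val.map (fun x => x + 1) := by
      have h1 : (S.image (fun x => x + 1)).val = S.val.map (fun x => x + 1) :=
        Finset.image_val_of_injOn hinj1.injOn
      calc X.val = (S.disjUnion (S.image (fun x => x + 1)) hdisj).val := by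
            rw [Finset.disjUnion_eq_union, hunion]
        _ = S.val + (S.image (fun x => x + 1)).val := rfl
        _ = S.val + S.val.map (fun x => x + 1) := by rw [h1]
    have hDval : D.val = d ::ₘ dstar ::ₘ X.val := by
      rw [hD, Finset.insert_val_of_notMem (by simp [hdX, hdds]),
        Finset.insert_val_of_notMem hdsX]
    have hSval : S.val = (Multiset.range m).map xs := by
      have himg : (Finset.range m).image xs = S := by
        ext a
        simp only [Finset.mem_image, Finset.mem_range]
        constructor
        · rintro ⟨j, hj, rfl⟩
          exact hmem j hj
        · intro ha
          obtain ⟨j, hj, hja⟩ := hsurj a ha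
          exact ⟨j, hj, hja⟩
      have hinjOn : Set.InjOn xs (Finset.range m) := by
        intro a ha bb hb hab
        simp only [Finset.coe_range, Set.mem_Iio] at ha hb
        rcases lt_trichotomy a bb with h | h | h
        · exact absurd hab (ne_of_lt (hmono a bb h hb))
        · exact h
        · exact absurd hab.symm (ne_of_lt (hmono bb a h ha))
      rw [← himg, Finset.image_val_of_injOn hinjOn]
      rfl
    refine Eq.trans (b := ∑ n ∈ Finset.range (2*(m+1)),
        ({f (n+1) - f n, -(f (n+1) - f n)} : Multiset ℤ)) ?_ ?_
    · exact Fin.sum_univ_eq_sum_range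
        (fun n => ({f (n+1) - f n, -(f (n+1) - f n)} : Multiset ℤ)) (2*(m+1))
    rw [stmt4_pairs (m+1) _, Finset.sum_range_succ' _ m]
    have hGpair : ∀ k ∈ Finset.range m,
        (({f (2*(k+1)+1) - f (2*(k+1)), -(f (2*(k+1)+1) - f (2*(k+1)))} : Multiset ℤ)
          + {f (2*(k+1)+1+1) - f (2*(k+1)+1), -(f (2*(k+1)+1+1) - f (2*(k+1)+1))})
        = ((({xs (m-1-k) + 1} : Multiset ℤ) + {xs (m-1-k)})
            + ((({xs (m-1-k) + 1} : Multiset ℤ) + {xs (m-1-k)}).map (fun x => -x)) : Multiset ℤ) := by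
      intro k _
      have d1 : f (2*(k+1)+1) - f (2*(k+1)) = xs (m-1-k) + 1 := by
        rw [show 2*(k+1)+1 = 2*k+3 by ring, show 2*(k+1) = 2*k+2 by ring, hoddval, hevenval]
        ring
      have d2 : f (2*(k+1)+1+1) - f (2*(k+1)+1) = -(xs (m-1-k)) := by
        rw [show 2*(k+1)+1+1 = 2*(k+1)+2 by ring, show 2*(k+1)+1 = 2*k+3 by ring,
          hoddval, hevenval (k+1)]
        push_cast
        ring
      rw [d1, d2, neg_neg]
      exact stmt4_four (xs (m-1-k) + 1) (xs (m-1-k))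
    rw [Finset.sum_congr rfl hGpair]
    have hG01 : (({f (2*0+1) - f (2*0), -(f (2*0+1) - f (2*0))} : Multiset ℤ)
          + {f (2*0+1+1) - f (2*0+1), -(f (2*0+1+1) - f (2*0+1))})
        = ((({d} : Multiset ℤ) + {dstar})
            + ((({d} : Multiset ℤ) + {dstar}).map (fun x => -x)) : Multiset ℤ) := by
      have d0 : f (2*0+1) - f (2*0) = -d := by
        norm_num [heval0, heval1]
      have d1' : f (2*0+1+1) - f (2*0+1) = dstar := by
        rw [show 2*0+1+1 = 2*0+2 by norm_num, hevenval, heval1]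
        push_cast [hbdef]
        ring
      rw [d0, d1', neg_neg]
      exact stmt4_four' d dstar
    rw [hG01]
    -- now sum up
    have hsum : ∑ k ∈ Finset.range m,
        ((({xs (m-1-k) + 1} : Multiset ℤ) + {xs (m-1-k)})
          + ((({xs (m-1-k) + 1} : Multiset ℤ) + {xs (m-1-k)}).map (fun x => -x)))
        = (∑ k ∈ Finset.range m, ((({xs (m-1-k) + 1} : Multiset ℤ) + {xs (m-1-k)})))
          + (∑ k ∈ Finset.range m, ((({xs (m-1-k) + 1} : Multiset ℤ) + {xs (m-1-k)}))).map
              (fun x => -x) := by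
      rw [Finset.sum_add_distrib]
      congr 1
      exact (map_sum (Multiset.mapAddMonoidHom (fun x : ℤ => -x))
        (fun k => (({xs (m-1-k) + 1} : Multiset ℤ) + {xs (m-1-k)})) (Finset.range m)).symm
    rw [hsum]
    have hA : (∑ k ∈ Finset.range m, ((({xs (m-1-k) + 1} : Multiset ℤ) + {xs (m-1-k)})))
        + (({d} : Multiset ℤ) + {dstar}) = D.val := by
      have hrefl := Finset.sum_range_reflect
        (fun j => (({xs j + 1} : Multiset ℤ) + {xs j})) m
      rw [hrefl, Finset.sum_add_distrib, stmt4_sum_singleton m (fun j => xs j + 1),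
        stmt4_sum_singleton m xs]
      rw [hDval, hXval, hSval, Multiset.map_map]
      simp only [← Multiset.singleton_add, Function.comp]
      abel
    rw [show D.val = (∑ k ∈ Finset.range m,
        ((({xs (m-1-k) + 1} : Multiset ℤ) + {xs (m-1-k)})))
        + (({d} : Multiset ℤ) + {dstar}) from hA.symm]
    simp only [Multiset.map_add]
    abel
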